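/- arXiv:1309.7649 — 3 statements merged into one kernel-verified Lean document; each statement's English description precedes it below -/
import Mathlib

section
/- Let p ∈ (0,1], let U be a p-Banach space of almost universal disposition for finite-dimensional p-Banach spaces, let ε ∈ (0,1), let X be a subspace of U, let Y be a finite-dimensional p-Banach space, and let f : X → Y be a strict ε-isometry. Then for every δ > 0 there exists a δ-isometry g : Y → U such that N(g (f x) − x) < ε * N x for every nonzero x ∈ X. -/
/- Common framework: p-normed and p-Banach spaces, following the paper's definitions. -/

namespace PGurarii

/-- A `p`-norm on a real vector space: `N x = 0 ↔ x = 0`, absolute homogeneity, and the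
`p`-triangle inequality `N (x + y) ^ p ≤ N x ^ p + N y ^ p` (values in `ℝ₊`). -/
structure PNorm (p : ℝ) (X : Type) [AddCommGroup X] [Module ℝ X] where
  N : X → ℝ
  nonneg : ∀ x : X, 0 ≤ N x
  eq_zero_iff : ∀ x : X, N x = 0 ↔ x = 0
  smul_eq : ∀ (a : ℝ) (x : X), N (a • x) = |a| * N x
  add_pow_le : ∀ x y : X, N (x + y) ^ p ≤ N x ^ p + N y ^ p

/-- Completeness (sequential) for the induced metric `d(x,y) = N (x - y) ^ p`. -/
def IsCompleteP (p : ℝ) {X : Type} [AddCommGroup X] [Module ℝ X] (NX : PNorm p X) : Prop :=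
  ∀ u : ℕ → X,
    (∀ ε : ℝ, 0 < ε → ∃ n₀ : ℕ, ∀ m ≥ n₀, ∀ n ≥ n₀, NX.N (u m - u n) ^ p < ε) →
    ∃ x : X, ∀ ε : ℝ, 0 < ε → ∃ n₀ : ℕ, ∀ n ≥ n₀, NX.N (u n - x) ^ p < ε

/-- Separability for the induced metric topology. -/
def IsSeparableP (p : ℝ) {X : Type} [AddCommGroup X] [Module ℝ X] (NX : PNorm p X) : Prop :=
  ∃ D : Set X, D.Countable ∧ ∀ x : X, ∀ ε : ℝ, 0 < ε → ∃ y ∈ D, NX.N (x - y) ^ p < ε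

/-- A subspace is closed for the induced metric topology. -/
def IsClosedSubP (p : ℝ) {X : Type} [AddCommGroup X] [Module ℝ X] (NX : PNorm p X)
    (S : Submodule ℝ X) : Prop :=
  ∀ x : X, (∀ ε : ℝ, 0 < ε → ∃ y ∈ S, NX.N (x - y) ^ p < ε) → x ∈ S

/-- The restriction of a `p`-norm to a subspace. -/
def PNorm.restrict {p : ℝ} {X : Type} [AddCommGroup X] [Module ℝ X]
    (NX : PNorm p X) (S : Submodule ℝ X) : PNorm p S where
  N x := NX.N x
  nonneg x := NX.nonneg x
  eq_zero_iff x := by rw [NX.eq_zero_iff]; exact ZeroMemClass.coe_eq_zero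
  smul_eq a x := NX.smul_eq a x
  add_pow_le x y := NX.add_pow_le x y

/-- A `p`-Banach space: a real vector space with a `p`-norm, complete for the induced metric. -/
structure PBanach (p : ℝ) where
  carrier : Type
  [addCommGroup : AddCommGroup carrier]
  [module : Module ℝ carrier]
  pnorm : PNorm p carrier
  complete : IsCompleteP p pnorm

attribute [instance] PBanach.addCommGroup PBanach.module

/-- `U` is of almost universal disposition for finite-dimensional `p`-Banach spaces: for every
`ε > 0`, every isometry from a subspace `X` of `U` (with the restricted `p`-norm) into a
finite-dimensional `p`-Banach space `Y` extends, after an `ε`-isometry `Y → U`, the inclusion. -/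
def AUD (p : ℝ) (U : Type) [AddCommGroup U] [Module ℝ U] (NU : PNorm p U) : Prop :=
  ∀ ε : ℝ, 0 < ε → ∀ Y : PBanach p, FiniteDimensional ℝ Y.carrier →
    ∀ (Xs : Submodule ℝ U) (g : Xs →ₗ[ℝ] Y.carrier),
      (∀ x : Xs, Y.pnorm.N (g x) = NU.N (x : U)) →
      ∃ f : Y.carrier →ₗ[ℝ] U,
        (∀ y, (1 - ε) * Y.pnorm.N y ≤ NU.N (f y) ∧ NU.N (f y) ≤ (1 + ε) * Y.pnorm.N y) ∧
        ∀ x : Xs, f (g x) = (x : U)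

/-- `U` is of universal disposition for separable `p`-Banach spaces. -/
def UD (p : ℝ) (U : Type) [AddCommGroup U] [Module ℝ U] (NU : PNorm p U) : Prop :=
  ∀ Y : PBanach p, IsSeparableP p Y.pnorm →
    ∀ (Xs : Submodule ℝ U), IsClosedSubP p NU Xs →
      ∀ g : Xs →ₗ[ℝ] Y.carrier, (∀ x : Xs, Y.pnorm.N (g x) = NU.N (x : U)) →
        ∃ f : Y.carrier →ₗ[ℝ] U, (∀ y, NU.N (f y) = Y.pnorm.N y) ∧ ∀ x : Xs, f (g x) = (x : U)

end PGurarii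

namespace PGurarii

section Aux

variable {p : ℝ}

lemma rpow_add_le' {x y : ℝ} (hx : 0 ≤ x) (hy : 0 ≤ y) (hp0 : 0 < p) (hp1 : p ≤ 1) :
    (x + y) ^ p ≤ x ^ p + y ^ p := by
  have h := NNReal.rpow_add_le_add_rpow x.toNNReal y.toNNReal hp0.le hp1
  have h2 := NNReal.coe_le_coe.mpr h
  rw [NNReal.coe_rpow, NNReal.coe_add, NNReal.coe_add, NNReal.coe_rpow, NNReal.coe_rpow,
    Real.coe_toNNReal x hx, Real.coe_toNNReal y hy] at h2
  exact h2

variable {V : Type} [AddCommGroup V] [Module ℝ V]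

lemma PNorm.zero' (NV : PNorm p V) : NV.N 0 = 0 := (NV.eq_zero_iff 0).mpr rfl

lemma PNorm.neg' (NV : PNorm p V) (x : V) : NV.N (-x) = NV.N x := by
  simpa using NV.smul_eq (-1) x

lemma PNorm.pos' (NV : PNorm p V) {x : V} (hx : x ≠ 0) : 0 < NV.N x :=
  lt_of_le_of_ne (NV.nonneg x) fun h => hx ((NV.eq_zero_iff x).mp h.symm)

lemma PNorm.rev_tri (NV : PNorm p V) (x y : V) :
    NV.N x ^ p ≤ NV.N y ^ p + NV.N (x - y) ^ p := by
  have h := NV.add_pow_le y (x - y)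
  simpa using h

lemma pnorm_sum_le (hp0 : 0 < p) (NV : PNorm p V) {ι : Type*} (s : Finset ι) (g : ι → V) :
    NV.N (∑ i ∈ s, g i) ^ p ≤ ∑ i ∈ s, NV.N (g i) ^ p := by
  classical
  induction s using Finset.cons_induction with
  | empty => simp [NV.zero', Real.zero_rpow hp0.ne']
  | cons a s ha ih =>
      rw [Finset.sum_cons, Finset.sum_cons]
      calc NV.N (g a + ∑ i ∈ s, g i) ^ p ≤ NV.N (g a) ^ p + NV.N (∑ i ∈ s, g i) ^ p :=
            NV.add_pow_le _ _
        _ ≤ _ := by linarith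

lemma continuous_rpow_const' {q : ℝ} (hq : 0 ≤ q) : Continuous fun x : ℝ => x ^ q :=
  continuous_iff_continuousAt.mpr fun x => Real.continuousAt_rpow_const x q (Or.inr hq)

lemma continuous_pnorm_pow (hp0 : 0 < p) {n : ℕ} (NV : PNorm p V) (L : (Fin n → ℝ) →ₗ[ℝ] V) :
    Continuous fun a => NV.N (L a) ^ p := by
  classical
  set S : (Fin n → ℝ) → ℝ := fun a => ∑ i, |a i| ^ p * NV.N (L (fun j => if i = j then 1 else 0)) ^ p with hS
  have hScont : Continuous S := by
    apply continuous_finset_sum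
    intro i _
    exact ((continuous_rpow_const' hp0.le).comp (continuous_apply i).abs).mul continuous_const
  have hS0 : S 0 = 0 := by
    simp [hS, Real.zero_rpow hp0.ne']
  have hbound : ∀ a, NV.N (L a) ^ p ≤ S a := by
    intro a
    have ha : L a = ∑ i, a i • L (fun j => if i = j then 1 else 0) := by
      conv_lhs => rw [pi_eq_sum_univ a]
      rw [map_sum]
      simp [map_smul]
    rw [ha]
    refine (pnorm_sum_le hp0 NV _ _).trans ?_
    apply Finset.sum_le_sum
    intro i _
    rw [NV.smul_eq, Real.mul_rpow (abs_nonneg _) (NV.nonneg _)]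
  have hdiff : ∀ a b, |NV.N (L a) ^ p - NV.N (L b) ^ p| ≤ S (a - b) := by
    intro a b
    rw [abs_sub_le_iff]
    constructor
    · have := NV.rev_tri (L a) (L b)
      rw [← map_sub] at this
      have h2 := hbound (a - b)
      linarith
    · have := NV.rev_tri (L b) (L a)
      rw [← map_sub, show L (b-a) = -(L (a-b)) by rw [← map_neg, neg_sub], NV.neg'] at this
      have h2 := hbound (a - b)
      linarith
  rw [continuous_iff_continuousAt]
  intro a
  rw [ContinuousAt, tendsto_iff_dist_tendsto_zero]
  apply squeeze_zero (fun b => dist_nonneg) (g := fun b => S (b - a))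
  · intro b
    rw [Real.dist_eq]
    exact hdiff b a
  · have : Filter.Tendsto (fun b => b - a) (nhds a) (nhds (0 : Fin n → ℝ)) := by
      simpa using (continuous_sub_right a).tendsto a
    have h := (hScont.tendsto 0).comp this
    rw [hS0] at h
    exact h

lemma continuous_pnorm (hp0 : 0 < p) {n : ℕ} (NV : PNorm p V) (L : (Fin n → ℝ) →ₗ[ℝ] V) :
    Continuous fun a => NV.N (L a) := by
  have h := (continuous_rpow_const' (q := p⁻¹) (by positivity)).comp (continuous_pnorm_pow hp0 NV L)
  have he : (fun a => NV.N (L a)) = fun a => (NV.N (L a) ^ p) ^ p⁻¹ := by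
    funext a
    rw [Real.rpow_rpow_inv (NV.nonneg _) hp0.ne']
  rw [he]
  exact h

end Aux

section Aux2

variable {p : ℝ} {V : Type} [AddCommGroup V] [Module ℝ V]

lemma exists_lower (hp0 : 0 < p) [FiniteDimensional ℝ V] [Nontrivial V] (NV : PNorm p V) :
    ∃ (n : ℕ) (e : (Fin n → ℝ) ≃ₗ[ℝ] V) (c : ℝ), 0 < c ∧ ∀ a, c * ‖a‖ ≤ NV.N (e a) := by
  classical
  set n := Module.finrank ℝ V with hn
  let b := Module.finBasis ℝ V
  let e : (Fin n → ℝ) ≃ₗ[ℝ] V := b.equivFun.symm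
  have hcont : Continuous fun a => NV.N (e a) := continuous_pnorm hp0 NV e.toLinearMap
  haveI : Nontrivial (Fin n → ℝ) := e.toEquiv.nontrivial
  have hsne : (Metric.sphere (0 : Fin n → ℝ) 1).Nonempty := NormedSpace.sphere_nonempty.mpr zero_le_one
  obtain ⟨a₀, ha₀, hmin⟩ := (isCompact_sphere (0 : Fin n → ℝ) 1).exists_isMinOn hsne hcont.continuousOn
  have ha₀n : ‖a₀‖ = 1 := mem_sphere_zero_iff_norm.mp ha₀
  have ha₀0 : a₀ ≠ 0 := by intro h; rw [h] at ha₀n; simp at ha₀n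
  have hc : 0 < NV.N (e a₀) := NV.pos' (by simpa using ha₀0)
  refine ⟨n, e, NV.N (e a₀), hc, fun a => ?_⟩
  rcases eq_or_ne a 0 with rfl | ha
  · simp [NV.zero', map_zero]
  · have ht : (0:ℝ) < ‖a‖ := norm_pos_iff.mpr ha
    have hmem : ‖a‖⁻¹ • a ∈ Metric.sphere (0 : Fin n → ℝ) 1 := by
      rw [mem_sphere_zero_iff_norm, norm_smul, norm_inv, norm_norm, inv_mul_cancel₀ ht.ne']
    have h := isMinOn_iff.mp hmin _ hmem
    have he : NV.N (e (‖a‖⁻¹ • a)) = ‖a‖⁻¹ * NV.N (e a) := by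
      rw [map_smul, NV.smul_eq, abs_of_pos (inv_pos.mpr ht)]
    rw [he] at h
    have h2 := mul_le_mul_of_nonneg_left h ht.le
    rw [← mul_assoc, mul_inv_cancel₀ ht.ne', one_mul] at h2
    linarith

lemma complete_of_findim (hp0 : 0 < p) [FiniteDimensional ℝ V] [Nontrivial V] (NV : PNorm p V) :
    IsCompleteP p NV := by
  obtain ⟨n, e, c, hc, hlow⟩ := exists_lower hp0 NV
  intro u hu
  set a : ℕ → (Fin n → ℝ) := fun k => e.symm (u k) with ha
  have hNa : ∀ k l, c * ‖a k - a l‖ ≤ NV.N (u k - u l) := by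
    intro k l
    have := hlow (a k - a l)
    rwa [map_sub, e.apply_symm_apply, e.apply_symm_apply] at this
  have hcauchy : CauchySeq a := by
    rw [Metric.cauchySeq_iff]
    intro η hη
    obtain ⟨n₀, hn₀⟩ := hu ((c * η / 2) ^ p) (by positivity)
    refine ⟨n₀, fun m hm k hk => ?_⟩
    have h1 := hn₀ m hm k hk
    have h2 : NV.N (u m - u k) < c * η / 2 := by
      have := Real.rpow_lt_rpow (Real.rpow_nonneg (NV.nonneg _) p) h1 (inv_pos.mpr hp0)
      rwa [Real.rpow_rpow_inv (NV.nonneg _) hp0.ne', Real.rpow_rpow_inv (by positivity) hp0.ne'] at this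
    have h3 := hNa m k
    rw [dist_eq_norm]
    nlinarith
  obtain ⟨α, hα⟩ := cauchySeq_tendsto_of_complete hcauchy
  refine ⟨e α, fun η hη => ?_⟩
  have hFp : Continuous fun d => NV.N (e.toLinearMap d) ^ p := continuous_pnorm_pow hp0 NV e.toLinearMap
  have htend : Filter.Tendsto (fun k => a k - α) Filter.atTop (nhds 0) := by
    simpa using hα.sub (tendsto_const_nhds (x := α))
  have htend2 : Filter.Tendsto (fun k => NV.N (u k - e α) ^ p) Filter.atTop (nhds 0) := by
    have hcomp := (hFp.tendsto 0).comp htend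
    have h0 : NV.N (e.toLinearMap (0 : Fin n → ℝ)) ^ p = 0 := by
      simp [NV.zero', Real.zero_rpow hp0.ne']
    rw [h0] at hcomp
    refine hcomp.congr fun k => ?_
    simp only [Function.comp_apply, map_sub, LinearEquiv.coe_coe, ha, e.apply_symm_apply]
  obtain ⟨n₀, hn₀⟩ := Metric.tendsto_atTop.mp htend2 η hη
  refine ⟨n₀, fun k hk => ?_⟩
  have := hn₀ k hk
  rwa [Real.dist_eq, sub_zero, abs_of_nonneg (Real.rpow_nonneg (NV.nonneg _) p)] at this

end Aux2

section Aux3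

variable {p : ℝ} {V W : Type} [AddCommGroup V] [Module ℝ V] [AddCommGroup W] [Module ℝ W]

lemma exists_uniform_bound (hp0 : 0 < p) [FiniteDimensional ℝ V] [Nontrivial V]
    (NV : PNorm p V) (NW : PNorm p W) (f : V →ₗ[ℝ] W) {ε : ℝ} (hε0 : 0 < ε) (hε1 : ε < 1)
    (hf : ∀ v : V, v ≠ 0 → (1 - ε) * NV.N v < NW.N (f v) ∧ NW.N (f v) < (1 + ε) * NV.N v) :
    ∃ κ : ℝ, 0 < κ ∧ κ < ε ∧
      ∀ v : V, (1 - κ) * NV.N v ≤ NW.N (f v) ∧ NW.N (f v) ≤ (1 + κ) * NV.N v := by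
  classical
  set n := Module.finrank ℝ V with hn
  let b := Module.finBasis ℝ V
  let e : (Fin n → ℝ) ≃ₗ[ℝ] V := b.equivFun.symm
  set G : (Fin n → ℝ) → ℝ := fun a => NV.N (e a) with hG
  set F : (Fin n → ℝ) → ℝ := fun a => NW.N (f (e a)) with hF
  have hGcont : Continuous G := continuous_pnorm hp0 NV e.toLinearMap
  have hFcont : Continuous F := continuous_pnorm hp0 NW (f.comp e.toLinearMap)
  haveI : Nontrivial (Fin n → ℝ) := e.toEquiv.nontrivial
  set S := Metric.sphere (0 : Fin n → ℝ) 1 with hSdef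
  have hsne : S.Nonempty := NormedSpace.sphere_nonempty.mpr zero_le_one
  have hGpos : ∀ a ∈ S, 0 < G a := by
    intro a haS
    have : a ≠ 0 := by
      intro h
      rw [hSdef, mem_sphere_zero_iff_norm, h] at haS
      simp at haS
    exact NV.pos' (by simpa using this)
  have hρcont : ContinuousOn (fun a => F a / G a) S :=
    hFcont.continuousOn.div hGcont.continuousOn fun a haS => (hGpos a haS).ne'
  obtain ⟨aM, haM, hmax⟩ := (isCompact_sphere (0 : Fin n → ℝ) 1).exists_isMaxOn hsne hρcont
  obtain ⟨am, ham, hmin⟩ := (isCompact_sphere (0 : Fin n → ℝ) 1).exists_isMinOn hsne hρcont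
  set M₀ := F aM / G aM with hM₀
  set m₀ := F am / G am with hm₀
  have haMne : e aM ≠ 0 := by
    intro h
    have h2 : aM = 0 := by simpa using h
    rw [h2, mem_sphere_zero_iff_norm] at haM
    simp at haM
  have hamne : e am ≠ 0 := by
    intro h
    have h2 : am = 0 := by simpa using h
    rw [h2, mem_sphere_zero_iff_norm] at ham
    simp at ham
  have hMlt : M₀ < 1 + ε := by
    have h1 := (hf (e aM) haMne).2
    have h2 := hGpos aM haM
    rw [hM₀, div_lt_iff₀ h2]
    calc F aM < (1 + ε) * NV.N (e aM) := h1
    _ = (1 + ε) * G aM := rfl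
  have hmgt : 1 - ε < m₀ := by
    have h1 := (hf (e am) hamne).1
    have h2 := hGpos am ham
    rw [hm₀, lt_div_iff₀ h2]
    calc (1 - ε) * G am = (1 - ε) * NV.N (e am) := rfl
    _ < F am := h1
  refine ⟨max (max (1 - m₀) (M₀ - 1)) (ε / 2), lt_max_of_lt_right (by linarith),
    max_lt (max_lt (by linarith) (by linarith)) (by linarith), fun v => ?_⟩
  rcases eq_or_ne v 0 with rfl | hv
  · simp [NV.zero', NW.zero', map_zero]
  · set κ := max (max (1 - m₀) (M₀ - 1)) (ε / 2) with hκ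
    have hbounds : m₀ * NV.N v ≤ NW.N (f v) ∧ NW.N (f v) ≤ M₀ * NV.N v := by
      set a : Fin n → ℝ := e.symm v with haa
      have hane : a ≠ 0 := by
        intro h
        apply hv
        have : e a = e 0 := by rw [h]
        rw [haa, e.apply_symm_apply, map_zero] at this
        exact this
      have ht : (0:ℝ) < ‖a‖ := norm_pos_iff.mpr hane
      have hmem : ‖a‖⁻¹ • a ∈ S := by
        rw [hSdef, mem_sphere_zero_iff_norm, norm_smul, norm_inv, norm_norm,
          inv_mul_cancel₀ ht.ne']
      have hGa : G (‖a‖⁻¹ • a) = ‖a‖⁻¹ * NV.N v := by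
        rw [hG]
        simp only [map_smul, NV.smul_eq, abs_of_pos (inv_pos.mpr ht)]
        rw [haa, e.apply_symm_apply]
      have hFa : F (‖a‖⁻¹ • a) = ‖a‖⁻¹ * NW.N (f v) := by
        rw [hF]
        simp only [map_smul, NW.smul_eq, abs_of_pos (inv_pos.mpr ht)]
        rw [haa, e.apply_symm_apply]
      have hGpos' : 0 < G (‖a‖⁻¹ • a) := hGpos _ hmem
      have hmax' := isMaxOn_iff.mp hmax _ hmem
      have hmin' := isMinOn_iff.mp hmin _ hmem
      rw [div_le_iff₀ hGpos'] at hmax'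
      rw [le_div_iff₀ hGpos'] at hmin'
      rw [hGa, hFa] at hmax' hmin'
      have key1 : ∀ x y c : ℝ, ‖a‖⁻¹ * x ≤ c * (‖a‖⁻¹ * y) → x ≤ c * y := by
        intro x y c h
        have h2 := mul_le_mul_of_nonneg_left h ht.le
        calc x = ‖a‖ * (‖a‖⁻¹ * x) := by
                rw [← mul_assoc, mul_inv_cancel₀ ht.ne', one_mul]
        _ ≤ ‖a‖ * (c * (‖a‖⁻¹ * y)) := h2
        _ = c * y := by
                rw [show ‖a‖ * (c * (‖a‖⁻¹ * y)) = (‖a‖ * ‖a‖⁻¹) * (c * y) from by ring,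
                  mul_inv_cancel₀ ht.ne', one_mul]
      have key2 : ∀ x y c : ℝ, c * (‖a‖⁻¹ * y) ≤ ‖a‖⁻¹ * x → c * y ≤ x := by
        intro x y c h
        have h2 := mul_le_mul_of_nonneg_left h ht.le
        calc c * y = ‖a‖ * (c * (‖a‖⁻¹ * y)) := by
                rw [show ‖a‖ * (c * (‖a‖⁻¹ * y)) = (‖a‖ * ‖a‖⁻¹) * (c * y) from by ring,
                  mul_inv_cancel₀ ht.ne', one_mul]
        _ ≤ ‖a‖ * (‖a‖⁻¹ * x) := h2
        _ = x := by rw [← mul_assoc, mul_inv_cancel₀ ht.ne', one_mul]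
      exact ⟨key2 _ _ _ hmin', key1 _ _ _ hmax'⟩
    have hm₀κ : 1 - κ ≤ m₀ := by
      have : 1 - m₀ ≤ κ := le_max_of_le_left (le_max_left _ _)
      linarith
    have hM₀κ : M₀ ≤ 1 + κ := by
      have : M₀ - 1 ≤ κ := le_max_of_le_left (le_max_right _ _)
      linarith
    have hNv : 0 ≤ NV.N v := NV.nonneg v
    exact ⟨le_trans (by nlinarith) hbounds.1, le_trans hbounds.2 (by nlinarith)⟩

end Aux3

section Aux4

variable {p : ℝ} {V W : Type} [AddCommGroup V] [Module ℝ V] [AddCommGroup W] [Module ℝ W]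

lemma amalgam_pnorm (hp0 : 0 < p) (hp1 : p ≤ 1)
    (NV : PNorm p V) (NW : PNorm p W) (f : V →ₗ[ℝ] W) {κ : ℝ} (hκ0 : 0 < κ) (hκ1 : κ < 1)
    (hfl : ∀ v, (1 - κ) * NV.N v ≤ NW.N (f v)) (hfu : ∀ v, NW.N (f v) ≤ (1 + κ) * NV.N v) :
    ∃ NZ : PNorm p (V × W),
      (∀ v : V, NZ.N (v, 0) = NV.N v) ∧
      (∀ w : W, NZ.N (0, w) = NW.N w) ∧
      (∀ v : V, NZ.N (-v, f v) ≤ κ * NV.N v) := by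
  classical
  have hpne : p ≠ 0 := hp0.ne'
  set E : V × W → V → ℝ :=
    fun z u => NV.N (z.1 + u) ^ p + NW.N (z.2 - f u) ^ p + κ ^ p * NV.N u ^ p with hE
  have hEnn : ∀ z u, 0 ≤ E z u := by
    intro z u
    have h1 := Real.rpow_nonneg (NV.nonneg (z.1 + u)) p
    have h2 := Real.rpow_nonneg (NW.nonneg (z.2 - f u)) p
    have h3 := Real.rpow_nonneg (NV.nonneg u) p
    have h4 := Real.rpow_nonneg hκ0.le p
    positivity
  set m : V × W → ℝ := fun z => sInf (Set.range (E z)) with hm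
  have hbdd : ∀ z, BddBelow (Set.range (E z)) := by
    intro z
    exact ⟨0, by rintro r ⟨u, rfl⟩; exact hEnn z u⟩
  have hne : ∀ z, (Set.range (E z)).Nonempty := fun z => ⟨E z 0, ⟨0, rfl⟩⟩
  have hm_nonneg : ∀ z, 0 ≤ m z := fun z =>
    le_csInf (hne z) (by rintro r ⟨u, rfl⟩; exact hEnn z u)
  have hm_le : ∀ z u, m z ≤ E z u := fun z u => csInf_le (hbdd z) ⟨u, rfl⟩
  have hle_m : ∀ z c, (∀ u, c ≤ E z u) → c ≤ m z := fun z c h =>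
    le_csInf (hne z) (by rintro r ⟨u, rfl⟩; exact h u)
  have hκp : 0 < κ ^ p := Real.rpow_pos_of_pos hκ0 p
  -- value at zero
  have hm0 : m 0 = 0 := by
    refine le_antisymm ?_ (hm_nonneg 0)
    have := hm_le 0 0
    simpa [hE, NV.zero', NW.zero', Real.zero_rpow hpne] using this
  -- lower bounds
  have hkey1 : ∀ z : V × W, NV.N z.1 ^ p ≤ (1 + (κ ^ p)⁻¹) * m z := by
    intro z
    have h : ∀ u, NV.N z.1 ^ p / (1 + (κ ^ p)⁻¹) ≤ E z u := by
      intro u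
      have h1 : NV.N z.1 ^ p ≤ NV.N (z.1 + u) ^ p + NV.N u ^ p := by
        have := NV.rev_tri z.1 (z.1 + u)
        have he : z.1 - (z.1 + u) = -u := by abel
        rw [he, NV.neg'] at this
        linarith
      have h2 : κ ^ p * NV.N u ^ p ≤ E z u := by
        have := Real.rpow_nonneg (NV.nonneg (z.1 + u)) p
        have := Real.rpow_nonneg (NW.nonneg (z.2 - f u)) p
        simp only [hE]
        linarith
      have h3 : NV.N (z.1 + u) ^ p ≤ E z u := by
        have := Real.rpow_nonneg (NW.nonneg (z.2 - f u)) p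
        have h4 := mul_nonneg hκp.le (Real.rpow_nonneg (NV.nonneg u) p)
        simp only [hE]
        linarith
      have h5 : NV.N u ^ p ≤ (κ ^ p)⁻¹ * E z u := by
        have h6' := mul_le_mul_of_nonneg_left h2 (inv_nonneg.mpr hκp.le)
        rwa [← mul_assoc, inv_mul_cancel₀ hκp.ne', one_mul] at h6'
      rw [div_le_iff₀ (by positivity)]
      have hEnn' := hEnn z u
      calc NV.N z.1 ^ p ≤ NV.N (z.1 + u) ^ p + NV.N u ^ p := h1
      _ ≤ E z u + (κ ^ p)⁻¹ * E z u := add_le_add h3 h5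
      _ = E z u * (1 + (κ ^ p)⁻¹) := by ring
    have := hle_m z _ h
    rw [div_le_iff₀ (by positivity)] at this
    linarith [this]
  have hkey2 : ∀ z : V × W, NW.N z.2 ^ p ≤ (1 + (1 + κ) ^ p * (κ ^ p)⁻¹) * m z := by
    intro z
    have h : ∀ u, NW.N z.2 ^ p / (1 + (1 + κ) ^ p * (κ ^ p)⁻¹) ≤ E z u := by
      intro u
      have h1 : NW.N z.2 ^ p ≤ NW.N (z.2 - f u) ^ p + NW.N (f u) ^ p := by
        have := NW.rev_tri z.2 (f u)
        linarith
      have hfub : NW.N (f u) ^ p ≤ (1 + κ) ^ p * NV.N u ^ p := by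
        rw [← Real.mul_rpow (by linarith) (NV.nonneg u)]
        exact Real.rpow_le_rpow (NW.nonneg _) (hfu u) hp0.le
      have h2 : κ ^ p * NV.N u ^ p ≤ E z u := by
        have := Real.rpow_nonneg (NV.nonneg (z.1 + u)) p
        have := Real.rpow_nonneg (NW.nonneg (z.2 - f u)) p
        simp only [hE]
        linarith
      have h5 : NV.N u ^ p ≤ (κ ^ p)⁻¹ * E z u := by
        have h6' := mul_le_mul_of_nonneg_left h2 (inv_nonneg.mpr hκp.le)
        rwa [← mul_assoc, inv_mul_cancel₀ hκp.ne', one_mul] at h6'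
      have h3 : NW.N (z.2 - f u) ^ p ≤ E z u := by
        have := Real.rpow_nonneg (NV.nonneg (z.1 + u)) p
        have h4 := mul_nonneg hκp.le (Real.rpow_nonneg (NV.nonneg u) p)
        simp only [hE]
        linarith
      have h1κp : (0:ℝ) < (1 + κ) ^ p := Real.rpow_pos_of_pos (by linarith) p
      rw [div_le_iff₀ (by positivity)]
      have h6 : (1 + κ) ^ p * NV.N u ^ p ≤ (1 + κ) ^ p * ((κ ^ p)⁻¹ * E z u) :=
        mul_le_mul_of_nonneg_left h5 h1κp.le
      calc NW.N z.2 ^ p ≤ NW.N (z.2 - f u) ^ p + NW.N (f u) ^ p := h1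
      _ ≤ E z u + (1 + κ) ^ p * ((κ ^ p)⁻¹ * E z u) := add_le_add h3 (hfub.trans h6)
      _ = E z u * (1 + (1 + κ) ^ p * (κ ^ p)⁻¹) := by ring
    have := hle_m z _ h
    rw [div_le_iff₀ (by positivity)] at this
    linarith [this]
  -- homogeneity of m
  have hsmul : ∀ (a : ℝ) (z : V × W), m (a • z) = |a| ^ p * m z := by
    intro a z
    rcases eq_or_ne a 0 with rfl | ha
    · simp [hm0, abs_zero, Real.zero_rpow hpne]
    · have hap : (0:ℝ) < |a| ^ p := Real.rpow_pos_of_pos (abs_pos.mpr ha) p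
      have hbij : ∀ u, E (a • z) (a • u) = |a| ^ p * E z u := by
        intro u
        simp only [hE, Prod.smul_fst, Prod.smul_snd]
        rw [show a • z.1 + a • u = a • (z.1 + u) from (smul_add a _ _).symm,
          show a • z.2 - f (a • u) = a • (z.2 - f u) from by rw [map_smul, smul_sub],
          NV.smul_eq, NW.smul_eq, NV.smul_eq,
          Real.mul_rpow (abs_nonneg a) (NV.nonneg _),
          Real.mul_rpow (abs_nonneg a) (NW.nonneg _),
          Real.mul_rpow (abs_nonneg a) (NV.nonneg _)]
        ring
      have hdir1 : m (a • z) ≤ |a| ^ p * m z := by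
        have h1 : ∀ u, m (a • z) / |a| ^ p ≤ E z u := by
          intro u
          rw [div_le_iff₀ hap]
          calc m (a • z) ≤ E (a • z) (a • u) := hm_le _ _
          _ = |a| ^ p * E z u := hbij u
          _ = E z u * |a| ^ p := by ring
        have := hle_m z _ h1
        rw [div_le_iff₀ hap] at this
        linarith [this]
      have hdir2 : |a| ^ p * m z ≤ m (a • z) := by
        apply hle_m
        intro u
        have : E (a • z) u = |a| ^ p * E z (a⁻¹ • u) := by
          have := hbij (a⁻¹ • u)
          rwa [smul_smul, mul_inv_cancel₀ ha, one_smul] at this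
        rw [this]
        exact mul_le_mul_of_nonneg_left (hm_le z _) hap.le
      linarith
  -- triangle for m
  have hadd : ∀ z z' : V × W, m (z + z') ≤ m z + m z' := by
    intro z z'
    have hEE : ∀ u u', E (z + z') (u + u') ≤ E z u + E z' u' := by
      intro u u'
      simp only [hE, Prod.fst_add, Prod.snd_add]
      have h1 : NV.N (z.1 + z'.1 + (u + u')) ^ p ≤ NV.N (z.1 + u) ^ p + NV.N (z'.1 + u') ^ p := by
        have := NV.add_pow_le (z.1 + u) (z'.1 + u')
        rwa [show z.1 + u + (z'.1 + u') = z.1 + z'.1 + (u + u') from by abel] at this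
      have h2 : NW.N (z.2 + z'.2 - f (u + u')) ^ p ≤
          NW.N (z.2 - f u) ^ p + NW.N (z'.2 - f u') ^ p := by
        have := NW.add_pow_le (z.2 - f u) (z'.2 - f u')
        rwa [show z.2 - f u + (z'.2 - f u') = z.2 + z'.2 - f (u + u') from by
          rw [map_add]; abel] at this
      have h3 : κ ^ p * NV.N (u + u') ^ p ≤ κ ^ p * (NV.N u ^ p + NV.N u' ^ p) :=
        mul_le_mul_of_nonneg_left (NV.add_pow_le u u') hκp.le
      linarith
    have hstep : ∀ u, m (z + z') - m z' ≤ E z u := by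
      intro u
      have h1 : m (z + z') - E z u ≤ m z' := by
        apply hle_m
        intro u'
        have := hEE u u'
        have := hm_le (z + z') (u + u')
        linarith
      linarith
    have := hle_m z _ hstep
    linarith
  -- build the p-norm
  refine ⟨{ N := fun z => m z ^ p⁻¹
            nonneg := fun z => Real.rpow_nonneg (hm_nonneg z) _
            eq_zero_iff := ?_
            smul_eq := ?_
            add_pow_le := ?_ }, ?_, ?_, ?_⟩
  · intro z
    constructor
    · intro h
      have hmz : m z = 0 := by
        have := congrArg (fun t => t ^ p) h
        simpa [Real.rpow_inv_rpow (hm_nonneg z) hpne, Real.zero_rpow hpne] using this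
      have h1 := hkey1 z
      have h2 := hkey2 z
      rw [hmz, mul_zero] at h1 h2
      have hz1 : NV.N z.1 = 0 := by
        have hle := le_antisymm h1 (Real.rpow_nonneg (NV.nonneg _) p)
        have := congrArg (fun t => t ^ p⁻¹) hle
        simpa [Real.rpow_rpow_inv (NV.nonneg _) hpne, Real.zero_rpow (inv_ne_zero hpne)]
          using this
      have hz2 : NW.N z.2 = 0 := by
        have hle := le_antisymm h2 (Real.rpow_nonneg (NW.nonneg _) p)
        have := congrArg (fun t => t ^ p⁻¹) hle
        simpa [Real.rpow_rpow_inv (NW.nonneg _) hpne, Real.zero_rpow (inv_ne_zero hpne)]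
          using this
      have hz1' := (NV.eq_zero_iff z.1).mp hz1
      have hz2' := (NW.eq_zero_iff z.2).mp hz2
      exact Prod.ext hz1' hz2'
    · rintro rfl
      show m 0 ^ p⁻¹ = 0
      rw [hm0, Real.zero_rpow (inv_ne_zero hpne)]
  · intro a z
    show m (a • z) ^ p⁻¹ = |a| * m z ^ p⁻¹
    rw [hsmul a z, Real.mul_rpow (Real.rpow_nonneg (abs_nonneg a) p) (hm_nonneg z),
      Real.rpow_rpow_inv (abs_nonneg a) hpne]
  · intro z z'
    show (m (z + z') ^ p⁻¹) ^ p ≤ (m z ^ p⁻¹) ^ p + (m z' ^ p⁻¹) ^ p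
    rw [Real.rpow_inv_rpow (hm_nonneg _) hpne, Real.rpow_inv_rpow (hm_nonneg _) hpne,
      Real.rpow_inv_rpow (hm_nonneg _) hpne]
    exact hadd z z'
  -- N (v, 0) = NV.N v
  · intro v
    have hub : m (v, 0) ≤ NV.N v ^ p := by
      have := hm_le (v, 0) 0
      simpa [hE, NV.zero', NW.zero', Real.zero_rpow hpne] using this
    have hlb : NV.N v ^ p ≤ m (v, 0) := by
      apply hle_m
      intro u
      simp only [hE]
      have h1 : NV.N v ^ p ≤ NV.N (v + u) ^ p + NV.N u ^ p := by
        have := NV.rev_tri v (v + u)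
        have he : v - (v + u) = -u := by abel
        rw [he, NV.neg'] at this
        linarith
      have hsub : (1:ℝ) ≤ (1 - κ) ^ p + κ ^ p := by
        have := rpow_add_le' (x := 1 - κ) (y := κ) (by linarith) hκ0.le hp0 hp1
        simpa using this
      have h2 : (1 - κ) ^ p * NV.N u ^ p ≤ NW.N ((0:W) - f u) ^ p := by
        rw [zero_sub, NW.neg']
        rw [← Real.mul_rpow (by linarith) (NV.nonneg u)]
        exact Real.rpow_le_rpow (mul_nonneg (by linarith) (NV.nonneg u)) (hfl u) hp0.le
      have h3 : (0:ℝ) ≤ NV.N u ^ p := Real.rpow_nonneg (NV.nonneg u) p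
      nlinarith [mul_le_mul_of_nonneg_right hsub h3]
    have heq : m (v, 0) = NV.N v ^ p := le_antisymm hub hlb
    show m (v, 0) ^ p⁻¹ = NV.N v
    rw [heq, Real.rpow_rpow_inv (NV.nonneg v) hpne]
  -- N (0, w) = NW.N w
  · intro w
    have hub : m (0, w) ≤ NW.N w ^ p := by
      have := hm_le (0, w) 0
      simpa [hE, NV.zero', Real.zero_rpow hpne] using this
    have hlb : NW.N w ^ p ≤ m (0, w) := by
      apply hle_m
      intro u
      simp only [hE]
      have h1 : NW.N w ^ p ≤ NW.N (w - f u) ^ p + NW.N (f u) ^ p := by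
        have := NW.rev_tri w (f u)
        linarith
      have hsub : ((1:ℝ) + κ) ^ p ≤ 1 + κ ^ p := by
        have := rpow_add_le' (x := (1:ℝ)) (y := κ) zero_le_one hκ0.le hp0 hp1
        simpa using this
      have h2 : NW.N (f u) ^ p ≤ (1 + κ) ^ p * NV.N u ^ p := by
        rw [← Real.mul_rpow (by linarith) (NV.nonneg u)]
        exact Real.rpow_le_rpow (NW.nonneg _) (hfu u) hp0.le
      have h3 : (0:ℝ) ≤ NV.N u ^ p := Real.rpow_nonneg (NV.nonneg u) p
      have h4 : NV.N ((0:V) + u) = NV.N u := by rw [zero_add]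
      rw [h4]
      nlinarith [mul_le_mul_of_nonneg_right hsub h3]
    have heq : m (0, w) = NW.N w ^ p := le_antisymm hub hlb
    show m (0, w) ^ p⁻¹ = NW.N w
    rw [heq, Real.rpow_rpow_inv (NW.nonneg w) hpne]
  -- N (-v, f v) ≤ κ * NV.N v
  · intro v
    have hub : m (-v, f v) ≤ κ ^ p * NV.N v ^ p := by
      have := hm_le (-v, f v) v
      simpa [hE, NV.zero', NW.zero', Real.zero_rpow hpne] using this
    have h2 : m (-v, f v) ^ p⁻¹ ≤ (κ ^ p * NV.N v ^ p) ^ p⁻¹ :=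
      Real.rpow_le_rpow (hm_nonneg _) hub (by positivity)
    show m (-v, f v) ^ p⁻¹ ≤ κ * NV.N v
    calc m (-v, f v) ^ p⁻¹ ≤ (κ ^ p * NV.N v ^ p) ^ p⁻¹ := h2
    _ = κ * NV.N v := by
        rw [← Real.mul_rpow hκ0.le (NV.nonneg v),
          Real.rpow_rpow_inv (mul_nonneg hκ0.le (NV.nonneg v)) hpne]

end Aux4


/-- in a space `U` of almost universal disposition, every strict `ε`-isometry `f`
from a subspace `X` of `U` into a finite-dimensional `p`-Banach space `Y` admits, for each
`δ > 0`, a `δ`-isometry `g : Y → U` with `N (g (f x) - x) < ε * N x` for nonzero `x ∈ X`. -/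
theorem statement7 (p : ℝ) (hp0 : 0 < p) (hp1 : p ≤ 1)
    (U : PBanach p) (hUaud : AUD p U.carrier U.pnorm)
    (ε : ℝ) (hε0 : 0 < ε) (hε1 : ε < 1)
    (X : Submodule ℝ U.carrier)
    (Y : PBanach p) (hY : FiniteDimensional ℝ Y.carrier)
    (f : X →ₗ[ℝ] Y.carrier)
    (hf : ∀ x : X, x ≠ 0 →
      (1 - ε) * U.pnorm.N (x : U.carrier) < Y.pnorm.N (f x) ∧
      Y.pnorm.N (f x) < (1 + ε) * U.pnorm.N (x : U.carrier)) :
    ∀ δ : ℝ, 0 < δ →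
      ∃ g : Y.carrier →ₗ[ℝ] U.carrier,
        (∀ y, (1 - δ) * Y.pnorm.N y ≤ U.pnorm.N (g y) ∧
          U.pnorm.N (g y) ≤ (1 + δ) * Y.pnorm.N y) ∧
        ∀ x : X, x ≠ 0 →
          U.pnorm.N (g (f x) - (x : U.carrier)) < ε * U.pnorm.N (x : U.carrier) := by
  intro δ hδ
  haveI := hY
  by_cases hX : X = ⊥
  · -- trivial subspace: f is an isometry on X = 0
    have hall0 : ∀ x : X, x = 0 := by
      intro x
      have hx : (x : U.carrier) ∈ (⊥ : Submodule ℝ U.carrier) := by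
        rw [← hX]; exact x.2
      exact Subtype.ext ((Submodule.mem_bot ℝ).mp hx)
    have hiso : ∀ x : X, Y.pnorm.N (f x) = U.pnorm.N (x : U.carrier) := by
      intro x
      rw [hall0 x]
      simp [map_zero, Y.pnorm.zero', U.pnorm.zero']
    obtain ⟨g, hg1, hg2⟩ := hUaud δ hδ Y hY X f hiso
    exact ⟨g, hg1, fun x hx => absurd (hall0 x) hx⟩
  · -- main case
    -- X is nontrivial and finite-dimensional
    obtain ⟨x₀, hx₀X, hx₀⟩ := Submodule.exists_mem_ne_zero_of_ne_bot hX
    haveI : Nontrivial X := ⟨⟨⟨x₀, hx₀X⟩, 0, by simp [Subtype.ext_iff, hx₀]⟩⟩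
    have hinj : Function.Injective f := by
      rw [injective_iff_map_eq_zero]
      intro x hfx
      by_contra hxne
      have h := (hf x hxne).1
      rw [hfx, Y.pnorm.zero'] at h
      have hxU : (x : U.carrier) ≠ 0 := fun h0 => hxne (Subtype.ext h0)
      have := U.pnorm.pos' hxU
      nlinarith
    haveI : FiniteDimensional ℝ X := FiniteDimensional.of_injective f hinj
    set NV : PNorm p X := U.pnorm.restrict X with hNV
    have hNVN : ∀ x : X, NV.N x = U.pnorm.N (x : U.carrier) := fun x => rfl
    have hf' : ∀ v : X, v ≠ 0 → (1 - ε) * NV.N v < Y.pnorm.N (f v) ∧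
        Y.pnorm.N (f v) < (1 + ε) * NV.N v := fun v hv => hf v hv
    obtain ⟨κ, hκ0, hκε, hκb⟩ := exists_uniform_bound hp0 NV Y.pnorm f hε0 hε1 hf'
    have hκ1 : κ < 1 := hκε.trans hε1
    obtain ⟨NZ, hNZ1, hNZ2, hNZ3⟩ := amalgam_pnorm hp0 hp1 NV Y.pnorm f hκ0 hκ1
      (fun v => (hκb v).1) (fun v => (hκb v).2)
    haveI : FiniteDimensional ℝ (X × Y.carrier) := inferInstance
    haveI : Nontrivial (X × Y.carrier) := inferInstance
    let Z : PBanach p := { carrier := X × Y.carrier, pnorm := NZ,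
                           complete := complete_of_findim hp0 NZ }
    set δ' := min δ ((ε - κ) / (2 * κ)) with hδ'
    have hδ'0 : 0 < δ' := lt_min hδ (div_pos (by linarith) (by linarith))
    have hδ'δ : δ' ≤ δ := min_le_left _ _
    have hδ'κ : (1 + δ') * κ < ε := by
      have h1 : δ' ≤ (ε - κ) / (2 * κ) := min_le_right _ _
      have h2 : δ' * κ ≤ (ε - κ) / 2 := by
        have := mul_le_mul_of_nonneg_right h1 hκ0.le
        rwa [div_mul_eq_mul_div, mul_comm (2 : ℝ) κ, ← div_div,
          mul_div_assoc, div_self hκ0.ne', mul_one] at this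
      nlinarith
    let i : X →ₗ[ℝ] X × Y.carrier := LinearMap.inl ℝ X Y.carrier
    have hi : ∀ x : X, Z.pnorm.N (i x) = U.pnorm.N (x : U.carrier) := by
      intro x
      have := hNZ1 x
      exact this
    obtain ⟨F, hF1, hF2⟩ := hUaud δ' hδ'0 Z
      (show FiniteDimensional ℝ Z.carrier from inferInstance) X i hi
    refine ⟨F.comp (LinearMap.inr ℝ X Y.carrier), fun y => ?_, fun x hx => ?_⟩
    · have h := hF1 ((0, y) : X × Y.carrier)
      have hzy : Z.pnorm.N ((0, y) : X × Y.carrier) = Y.pnorm.N y := hNZ2 y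
      rw [hzy] at h
      have hNy : 0 ≤ Y.pnorm.N y := Y.pnorm.nonneg y
      constructor
      · calc (1 - δ) * Y.pnorm.N y ≤ (1 - δ') * Y.pnorm.N y := by nlinarith
        _ ≤ U.pnorm.N (F (0, y)) := h.1
      · calc U.pnorm.N (F (0, y)) ≤ (1 + δ') * Y.pnorm.N y := h.2
        _ ≤ (1 + δ) * Y.pnorm.N y := by nlinarith
    · have hxU : (x : U.carrier) ≠ 0 := fun h0 => hx (Subtype.ext h0)
      have hNx : 0 < U.pnorm.N (x : U.carrier) := U.pnorm.pos' hxU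
      have hFx : F (i x) = (x : U.carrier) := hF2 x
      have hrw : F.comp (LinearMap.inr ℝ X Y.carrier) (f x) - (x : U.carrier)
          = F ((-x, f x) : X × Y.carrier) := by
        rw [LinearMap.comp_apply, ← hFx, ← map_sub]
        congr 1
        simp [i, Prod.ext_iff]
        exact Prod.ext (zero_sub x) (sub_zero (f x))
      rw [hrw]
      have h1 := (hF1 ((-x, f x) : X × Y.carrier)).2
      have h2 : Z.pnorm.N ((-x, f x) : X × Y.carrier) ≤ κ * NV.N x := hNZ3 x
      have h3 : U.pnorm.N (F ((-x, f x) : X × Y.carrier))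
          ≤ (1 + δ') * (κ * NV.N x) := by
        refine h1.trans ?_
        have : (0:ℝ) ≤ 1 + δ' := by linarith
        exact mul_le_mul_of_nonneg_left h2 this
      have h4 : NV.N x = U.pnorm.N (x : U.carrier) := hNVN x
      rw [h4] at h3
      calc U.pnorm.N (F ((-x, f x) : X × Y.carrier))
          ≤ (1 + δ') * (κ * U.pnorm.N (x : U.carrier)) := h3
      _ = ((1 + δ') * κ) * U.pnorm.N (x : U.carrier) := by ring
      _ < ε * U.pnorm.N (x : U.carrier) := by
          exact mul_lt_mul_of_pos_right hδ'κ hNx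


end PGurarii
end

section
/- Let p ∈ (0,1], let H be the 2-dimensional real Hilbert space (Euclidean space ℝ² with the Euclidean norm ‖·‖₂), let X be a p-Banach space and let j₀ : H → X be a linear map with N(j₀ h) = ‖h‖₂ for all h ∈ H. Suppose X has the property (✓): for every 3-dimensional real vector space F equipped with a p-norm N_F and every linear map i : H → F with N_F(i h) = ‖h‖₂ for all h ∈ H, there exists a linear map j : F → X with N(j w) = N_F(w) for all w ∈ F and j (i h) = j₀ h for all h ∈ H. Then every dense subset of X has cardinality at least the continuum 2^{ℵ₀}. -/
namespace PGurarii

noncomputable section Statement9Aux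

open Real RealInnerProductSpace

private lemma pgur_radd {p : ℝ} (hp0 : 0 < p) (hp1 : p ≤ 1) {a b : ℝ}
    (ha : 0 ≤ a) (hb : 0 ≤ b) : (a + b) ^ p ≤ a ^ p + b ^ p := by
  have h := NNReal.rpow_add_le_add_rpow a.toNNReal b.toNNReal hp0.le hp1
  rw [← Real.toNNReal_add ha hb] at h
  have h2 := NNReal.coe_le_coe.2 h
  rw [NNReal.coe_rpow, NNReal.coe_add, NNReal.coe_rpow, NNReal.coe_rpow,
    Real.coe_toNNReal _ (add_nonneg ha hb), Real.coe_toNNReal _ ha,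
    Real.coe_toNNReal _ hb] at h2
  exact h2

/-- angles -/
private def th (n : ℕ) : ℝ := (2 : ℝ)⁻¹ ^ n

private lemma th_pos (n : ℕ) : 0 < th n := pow_pos (by norm_num) n

private lemma th_le_one (n : ℕ) : th n ≤ 1 := pow_le_one₀ (by norm_num) (by norm_num)

private lemma th_half {m n : ℕ} (hmn : m < n) : th n ≤ th m / 2 := by
  have : th n ≤ th (m + 1) :=
    pow_le_pow_of_le_one (by norm_num) (by norm_num) (Nat.succ_le_of_lt hmn)
  calc th n ≤ th (m+1) := this
    _ = th m / 2 := by simp [th, pow_succ]; ring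

private lemma th_gap {m n : ℕ} (h : m ≠ n) : th n / 2 ≤ |th n - th m| := by
  rcases lt_or_gt_of_ne h with hlt | hlt
  · have h1 := th_half hlt
    have h2 := th_pos n
    rw [abs_sub_comm, abs_of_nonneg (by linarith)]
    linarith
  · have h1 := th_half hlt
    have h2 := th_pos m
    rw [abs_of_nonneg (by linarith)]
    linarith

private lemma th_diff_le_one (m n : ℕ) : |th n - th m| ≤ 1 := by
  rw [abs_sub_le_iff]
  constructor <;> nlinarith [th_pos n, th_pos m, th_le_one n, th_le_one m]

private def cc (n : ℕ) : ℝ := Real.cos (th n / 2)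

private lemma half_pi_gt : (3 : ℝ) / 2 < π / 2 := by nlinarith [Real.pi_gt_three]

private lemma cc_pos (n : ℕ) : 0 < cc n := by
  apply Real.cos_pos_of_mem_Ioo
  constructor
  · nlinarith [th_pos n, Real.pi_gt_three]
  · nlinarith [th_pos n, th_le_one n, Real.pi_gt_three]

private lemma cc_lt_one (n : ℕ) : cc n < 1 := by
  refine lt_of_le_of_ne (Real.cos_le_one _) fun heq => ?_
  obtain ⟨k, hk⟩ := (Real.cos_eq_one_iff _).1 heq
  have h1 := th_pos n
  have h2 := th_le_one n
  rcases le_or_gt (k : ℝ) 0 with hk0 | hk0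
  · nlinarith [Real.pi_gt_three]
  · have hk0' : 0 < k := by exact_mod_cast hk0
    have hk1 : (1:ℤ) ≤ k := by omega
    have : (1 : ℝ) ≤ (k : ℝ) := by exact_mod_cast hk1
    nlinarith [Real.pi_gt_three]

private lemma cos_diff_le {m n : ℕ} (h : m ≠ n) : Real.cos (th n - th m) ≤ cc n := by
  rw [← Real.cos_abs]
  exact Real.cos_le_cos_of_nonneg_of_le_pi (by linarith [th_pos n])
    (by nlinarith [th_diff_le_one m n, Real.pi_gt_three]) (th_gap h)

private lemma cos_diff_nonneg (m n : ℕ) : 0 ≤ Real.cos (th n - th m) := by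
  apply Real.cos_nonneg_of_mem_Icc
  constructor
  · have := th_diff_le_one m n
    rw [abs_le] at this
    nlinarith [Real.pi_gt_three, this.1]
  · have := th_diff_le_one m n
    rw [abs_le] at this
    nlinarith [Real.pi_gt_three, this.2]

private def uvec (n : ℕ) : EuclideanSpace ℝ (Fin 2) :=
  (WithLp.equiv 2 (Fin 2 → ℝ)).symm ![Real.cos (th n), Real.sin (th n)]

private lemma norm_uvec (n : ℕ) : ‖uvec n‖ = 1 := by
  rw [EuclideanSpace.norm_eq]
  simp [uvec, Fin.sum_univ_two, Real.norm_eq_abs, sq_abs, Real.cos_sq_add_sin_sq]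

private lemma inner_uvec (m n : ℕ) : ⟪uvec m, uvec n⟫ = Real.cos (th m - th n) := by
  simp [uvec, PiLp.inner_apply, Fin.sum_univ_two, RCLike.inner_apply, conj_trivial,
    Real.cos_sub]
  ring

section P

variable {p : ℝ}

private def rr (p : ℝ) (n : ℕ) : ℝ := ((1 - cc n ^ p)⁻¹) ^ p⁻¹

private lemma q_pos (hp0 : 0 < p) (n : ℕ) : 0 < 1 - cc n ^ p :=
  sub_pos.2 (Real.rpow_lt_one (cc_pos n).le (cc_lt_one n) hp0)

private lemma rr_nonneg (hp0 : 0 < p) (n : ℕ) : 0 ≤ rr p n :=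
  Real.rpow_nonneg (inv_nonneg.2 (q_pos hp0 n).le) _

private lemma rr_pow (hp0 : 0 < p) (n : ℕ) : rr p n ^ p = (1 - cc n ^ p)⁻¹ :=
  Real.rpow_inv_rpow (inv_nonneg.2 (q_pos hp0 n).le) hp0.ne'

private lemma one_le_rr_pow (hp0 : 0 < p) (n : ℕ) : 1 ≤ rr p n ^ p := by
  rw [rr_pow hp0]
  rw [le_inv_comm₀ one_pos (q_pos hp0 n)]
  have := Real.rpow_nonneg (cc_pos n).le p
  linarith

private lemma rr_key (hp0 : 0 < p) (n : ℕ) : rr p n ^ p * cc n ^ p = rr p n ^ p - 1 := by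
  have hq := (q_pos hp0 n).ne'
  rw [rr_pow hp0]
  have hcc : cc n ^ p = 1 - (1 - cc n ^ p) := by ring
  rw [hcc]
  field_simp
  have hq' : (1 - (1 - (1 - cc n ^ p))) ≠ 0 := by rwa [sub_sub_cancel]
  rw [div_sub_one hq']
  congr 1
  ring

private def xvec (p : ℝ) (n : ℕ) : EuclideanSpace ℝ (Fin 2) := rr p n • uvec n

private lemma norm_xvec (hp0 : 0 < p) (n : ℕ) : ‖xvec p n‖ = rr p n := by
  rw [xvec, norm_smul, norm_uvec, Real.norm_eq_abs, abs_of_nonneg (rr_nonneg hp0 n), mul_one]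

private lemma inner_xvec_self (p : ℝ) (n : ℕ) : ⟪xvec p n, uvec n⟫ = rr p n := by
  rw [xvec, real_inner_smul_left, inner_uvec, sub_self, Real.cos_zero, mul_one]

private lemma inner_xvec_le (hp0 : 0 < p) {m n : ℕ} (h : m ≠ n) :
    |⟪xvec p n, uvec m⟫| ≤ rr p n * cc n := by
  rw [xvec, real_inner_smul_left, inner_uvec, abs_mul, abs_of_nonneg (rr_nonneg hp0 n),
    abs_of_nonneg (cos_diff_nonneg m n)]
  exact mul_le_mul_of_nonneg_left (cos_diff_le h) (rr_nonneg hp0 n)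

private lemma inner_xvec_abs_le (hp0 : 0 < p) (m n : ℕ) : |⟪xvec p n, uvec m⟫| ≤ rr p n := by
  calc |⟪xvec p n, uvec m⟫| ≤ ‖xvec p n‖ * ‖uvec m‖ := abs_real_inner_le_norm _ _
    _ = rr p n := by rw [norm_xvec hp0, norm_uvec, mul_one]

end P

/-- the sup seminorm -/
private def SA (A : Set ℕ) (h : EuclideanSpace ℝ (Fin 2)) : ℝ :=
  ⨆ n : ℕ, (Aᶜ).indicator (fun m => |⟪h, uvec m⟫|) n

private lemma SA_term_le (A : Set ℕ) (h : EuclideanSpace ℝ (Fin 2)) {c : ℝ} (hc : 0 ≤ c)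
    (hb : ∀ n ∉ A, |⟪h, uvec n⟫| ≤ c) (n : ℕ) :
    (Aᶜ).indicator (fun m => |⟪h, uvec m⟫|) n ≤ c := by
  by_cases hn : n ∈ A
  · rw [Set.indicator_of_notMem (by simpa using hn)]; exact hc
  · rw [Set.indicator_of_mem (by simpa using hn)]; exact hb n hn

private lemma SA_bdd (A : Set ℕ) (h : EuclideanSpace ℝ (Fin 2)) :
    BddAbove (Set.range fun n => (Aᶜ).indicator (fun m => |⟪h, uvec m⟫|) n) := by
  refine ⟨‖h‖, ?_⟩
  rintro _ ⟨n, rfl⟩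
  refine SA_term_le A h (norm_nonneg h) (fun n _ => ?_) n
  calc |⟪h, uvec n⟫| ≤ ‖h‖ * ‖uvec n‖ := abs_real_inner_le_norm _ _
    _ = ‖h‖ := by rw [norm_uvec, mul_one]

private lemma SA_le (A : Set ℕ) (h : EuclideanSpace ℝ (Fin 2)) {c : ℝ} (hc : 0 ≤ c)
    (hb : ∀ n ∉ A, |⟪h, uvec n⟫| ≤ c) : SA A h ≤ c :=
  ciSup_le (SA_term_le A h hc hb)

private lemma SA_ge (A : Set ℕ) (h : EuclideanSpace ℝ (Fin 2)) {n : ℕ} (hn : n ∉ A) :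
    |⟪h, uvec n⟫| ≤ SA A h := by
  have := le_ciSup (SA_bdd A h) n
  rwa [Set.indicator_of_mem (by simpa using hn)] at this

private lemma SA_nonneg (A : Set ℕ) (h : EuclideanSpace ℝ (Fin 2)) : 0 ≤ SA A h := by
  refine le_trans ?_ (le_ciSup (SA_bdd A h) 0)
  exact Set.indicator_nonneg (fun _ _ => abs_nonneg _) 0

private lemma SA_le_norm (A : Set ℕ) (h : EuclideanSpace ℝ (Fin 2)) : SA A h ≤ ‖h‖ := by
  refine SA_le A h (norm_nonneg h) (fun n _ => ?_)
  calc |⟪h, uvec n⟫| ≤ ‖h‖ * ‖uvec n‖ := abs_real_inner_le_norm _ _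
    _ = ‖h‖ := by rw [norm_uvec, mul_one]

private lemma SA_add (A : Set ℕ) (h h' : EuclideanSpace ℝ (Fin 2)) :
    SA A (h + h') ≤ SA A h + SA A h' := by
  refine SA_le A _ (add_nonneg (SA_nonneg A h) (SA_nonneg A h')) (fun n hn => ?_)
  calc |⟪h + h', uvec n⟫| = |⟪h, uvec n⟫ + ⟪h', uvec n⟫| := by rw [inner_add_left]
    _ ≤ |⟪h, uvec n⟫| + |⟪h', uvec n⟫| := abs_add_le _ _
    _ ≤ SA A h + SA A h' := add_le_add (SA_ge A h hn) (SA_ge A h' hn)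

private lemma SA_smul (A : Set ℕ) (a : ℝ) (h : EuclideanSpace ℝ (Fin 2)) :
    SA A (a • h) = |a| * SA A h := by
  rw [SA, SA, Real.mul_iSup_of_nonneg (abs_nonneg a)]
  congr 1
  funext n
  by_cases hn : n ∈ A
  · rw [Set.indicator_of_notMem (by simpa using hn), Set.indicator_of_notMem (by simpa using hn),
      mul_zero]
  · rw [Set.indicator_of_mem (by simpa using hn), Set.indicator_of_mem (by simpa using hn),
      real_inner_smul_left, abs_mul]

private lemma SA_neg (A : Set ℕ) (h : EuclideanSpace ℝ (Fin 2)) : SA A (-h) = SA A h := by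
  have := SA_smul A (-1) h
  simpa using this

section PP

variable {p : ℝ}

private lemma SA_xvec_mem (hp0 : 0 < p) (A : Set ℕ) {n : ℕ} (hn : n ∈ A) :
    SA A (xvec p n) ≤ rr p n * cc n := by
  refine SA_le A _ (mul_nonneg (rr_nonneg hp0 n) (cc_pos n).le) (fun m hm => ?_)
  exact inner_xvec_le hp0 (fun hmn => hm (hmn ▸ hn))

private lemma SA_xvec_not_mem (hp0 : 0 < p) (A : Set ℕ) {n : ℕ} (hn : n ∉ A) :
    SA A (xvec p n) = rr p n := by
  refine le_antisymm (SA_le A _ (rr_nonneg hp0 n) (fun m _ => inner_xvec_abs_le hp0 m n)) ?_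
  have := SA_ge A (xvec p n) hn
  rwa [inner_xvec_self, abs_of_nonneg (rr_nonneg hp0 n)] at this

/-- the composite functional -/
private def MA (p : ℝ) (A : Set ℕ) (w : EuclideanSpace ℝ (Fin 2) × ℝ) : ℝ :=
  max (‖w.1‖ ^ p + |w.2| ^ p) (SA A w.1 ^ p + 2 * |w.2| ^ p)

private lemma MA_nonneg (p : ℝ) (A : Set ℕ) (w : EuclideanSpace ℝ (Fin 2) × ℝ) :
    0 ≤ MA p A w :=
  le_trans (by positivity) (le_max_left _ _)

private lemma MA_smul (hp0 : 0 < p) (A : Set ℕ) (a : ℝ) (w : EuclideanSpace ℝ (Fin 2) × ℝ) :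
    MA p A (a • w) = |a| ^ p * MA p A w := by
  have h1 : (a • w).1 = a • w.1 := rfl
  have h2 : (a • w).2 = a * w.2 := rfl
  rw [MA, MA, h1, h2, norm_smul, Real.norm_eq_abs, SA_smul, abs_mul,
    Real.mul_rpow (abs_nonneg a) (norm_nonneg _),
    Real.mul_rpow (abs_nonneg a) (SA_nonneg A w.1),
    Real.mul_rpow (abs_nonneg a) (abs_nonneg _),
    mul_max_of_nonneg _ _ (Real.rpow_nonneg (abs_nonneg a) p)]
  ring_nf

private lemma MA_add (hp0 : 0 < p) (hp1 : p ≤ 1) (A : Set ℕ)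
    (w w' : EuclideanSpace ℝ (Fin 2) × ℝ) :
    MA p A (w + w') ≤ MA p A w + MA p A w' := by
  have hw1 : (w + w').1 = w.1 + w'.1 := rfl
  have hw2 : (w + w').2 = w.2 + w'.2 := rfl
  have l1 : ‖w.1‖ ^ p + |w.2| ^ p ≤ MA p A w := le_max_left _ _
  have l2 : SA A w.1 ^ p + 2 * |w.2| ^ p ≤ MA p A w := le_max_right _ _
  have l1' : ‖w'.1‖ ^ p + |w'.2| ^ p ≤ MA p A w' := le_max_left _ _
  have l2' : SA A w'.1 ^ p + 2 * |w'.2| ^ p ≤ MA p A w' := le_max_right _ _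
  rw [MA, hw1, hw2]
  apply max_le
  · have e1 : ‖w.1 + w'.1‖ ^ p ≤ ‖w.1‖ ^ p + ‖w'.1‖ ^ p :=
      le_trans (Real.rpow_le_rpow (norm_nonneg _) (norm_add_le _ _) hp0.le)
        (pgur_radd hp0 hp1 (norm_nonneg _) (norm_nonneg _))
    have e2 : |w.2 + w'.2| ^ p ≤ |w.2| ^ p + |w'.2| ^ p :=
      le_trans (Real.rpow_le_rpow (abs_nonneg _) (abs_add_le _ _) hp0.le)
        (pgur_radd hp0 hp1 (abs_nonneg _) (abs_nonneg _))
    linarith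
  · have e1 : SA A (w.1 + w'.1) ^ p ≤ SA A w.1 ^ p + SA A w'.1 ^ p :=
      le_trans (Real.rpow_le_rpow (SA_nonneg A _) (SA_add A _ _) hp0.le)
        (pgur_radd hp0 hp1 (SA_nonneg A _) (SA_nonneg A _))
    have e2 : |w.2 + w'.2| ^ p ≤ |w.2| ^ p + |w'.2| ^ p :=
      le_trans (Real.rpow_le_rpow (abs_nonneg _) (abs_add_le _ _) hp0.le)
        (pgur_radd hp0 hp1 (abs_nonneg _) (abs_nonneg _))
    linarith

/-- the `p`-norm associated to `A` -/
private def NPA (hp0 : 0 < p) (hp1 : p ≤ 1) (A : Set ℕ) :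
    PNorm p (EuclideanSpace ℝ (Fin 2) × ℝ) where
  N w := MA p A w ^ p⁻¹
  nonneg w := Real.rpow_nonneg (MA_nonneg p A w) _
  eq_zero_iff w := by
    show MA p A w ^ p⁻¹ = 0 ↔ w = 0
    constructor
    · intro h
      have hM : MA p A w = 0 := by
        rwa [Real.rpow_eq_zero (MA_nonneg p A w) (inv_ne_zero hp0.ne')] at h
      have h1 : ‖w.1‖ ^ p + |w.2| ^ p ≤ 0 := hM ▸ le_max_left _ _
      have hb1 : (0:ℝ) ≤ ‖w.1‖ ^ p := Real.rpow_nonneg (norm_nonneg _) p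
      have hb2 : (0:ℝ) ≤ |w.2| ^ p := Real.rpow_nonneg (abs_nonneg _) p
      have e1 : ‖w.1‖ ^ p = 0 := le_antisymm (by linarith) hb1
      have e2 : |w.2| ^ p = 0 := le_antisymm (by linarith) hb2
      rw [Real.rpow_eq_zero (norm_nonneg _) hp0.ne'] at e1
      rw [Real.rpow_eq_zero (abs_nonneg _) hp0.ne'] at e2
      have : w.1 = 0 := norm_eq_zero.1 e1
      have : w.2 = 0 := abs_eq_zero.1 e2
      exact Prod.ext ‹w.1 = 0› ‹w.2 = 0›
    · rintro rfl
      have hS : SA A (0 : EuclideanSpace ℝ (Fin 2)) = 0 :=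
        le_antisymm (by simpa using SA_le_norm A 0) (SA_nonneg A 0)
      have : MA p A 0 = 0 := by
        rw [MA]
        simp only [Prod.fst_zero, Prod.snd_zero, norm_zero, abs_zero, hS,
          Real.zero_rpow hp0.ne']
        norm_num
      rw [this, Real.zero_rpow (inv_ne_zero hp0.ne')]
  smul_eq a w := by
    show MA p A (a • w) ^ p⁻¹ = |a| * MA p A w ^ p⁻¹
    rw [MA_smul hp0 A a w,
      Real.mul_rpow (Real.rpow_nonneg (abs_nonneg a) p) (MA_nonneg p A w),
      ← Real.rpow_mul (abs_nonneg a), mul_inv_cancel₀ hp0.ne', Real.rpow_one]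
  add_pow_le w w' := by
    show (MA p A (w + w') ^ p⁻¹) ^ p ≤ (MA p A w ^ p⁻¹) ^ p + (MA p A w' ^ p⁻¹) ^ p
    rw [Real.rpow_inv_rpow (MA_nonneg p A _) hp0.ne',
      Real.rpow_inv_rpow (MA_nonneg p A _) hp0.ne',
      Real.rpow_inv_rpow (MA_nonneg p A _) hp0.ne']
    exact MA_add hp0 hp1 A w w'

private lemma NPA_pow (hp0 : 0 < p) (hp1 : p ≤ 1) (A : Set ℕ)
    (w : EuclideanSpace ℝ (Fin 2) × ℝ) : (NPA hp0 hp1 A).N w ^ p = MA p A w :=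
  Real.rpow_inv_rpow (MA_nonneg p A w) hp0.ne'

private lemma NPA_inl (hp0 : 0 < p) (hp1 : p ≤ 1) (A : Set ℕ)
    (h : EuclideanSpace ℝ (Fin 2)) : (NPA hp0 hp1 A).N (h, 0) = ‖h‖ := by
  have : MA p A (h, (0:ℝ)) = ‖h‖ ^ p := by
    rw [MA]
    simp only [abs_zero, Real.zero_rpow hp0.ne', add_zero, mul_zero]
    exact max_eq_left (Real.rpow_le_rpow (SA_nonneg A h) (SA_le_norm A h) hp0.le)
  show MA p A (h, (0:ℝ)) ^ p⁻¹ = ‖h‖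
  rw [this, ← Real.rpow_mul (norm_nonneg h), mul_inv_cancel₀ hp0.ne', Real.rpow_one]

private lemma NPA_profile_mem (hp0 : 0 < p) (hp1 : p ≤ 1) (A : Set ℕ) {n : ℕ} (hn : n ∈ A) :
    (NPA hp0 hp1 A).N (-(xvec p n), 1) ^ p = rr p n ^ p + 1 := by
  rw [NPA_pow, MA]
  simp only [norm_neg, abs_one, Real.one_rpow, mul_one]
  rw [norm_xvec hp0, SA_neg, max_eq_left]
  have hS : SA A (xvec p n) ^ p ≤ rr p n ^ p - 1 := by
    calc SA A (xvec p n) ^ p ≤ (rr p n * cc n) ^ p :=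
          Real.rpow_le_rpow (SA_nonneg A _) (SA_xvec_mem hp0 A hn) hp0.le
      _ = rr p n ^ p * cc n ^ p := Real.mul_rpow (rr_nonneg hp0 n) (cc_pos n).le
      _ = rr p n ^ p - 1 := rr_key hp0 n
  linarith

private lemma NPA_profile_not_mem (hp0 : 0 < p) (hp1 : p ≤ 1) (A : Set ℕ) {n : ℕ} (hn : n ∉ A) :
    (NPA hp0 hp1 A).N (-(xvec p n), 1) ^ p = rr p n ^ p + 2 := by
  rw [NPA_pow, MA]
  simp only [norm_neg, abs_one, Real.one_rpow, mul_one]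
  rw [norm_xvec hp0, SA_neg, SA_xvec_not_mem hp0 A hn, max_eq_right]
  linarith

end PP

end Statement9Aux


/-- Ben Yaacov–Henson, Haydon's proof: if a `p`-Banach space `X` contains the
2-dimensional Hilbert space isometrically and has the extension property (✓) for 3-dimensional
`p`-normed spaces, then every dense subset of `X` has cardinality at least the continuum. -/
theorem statement9 (p : ℝ) (hp0 : 0 < p) (hp1 : p ≤ 1)
    (X : PBanach p)
    (j₀ : EuclideanSpace ℝ (Fin 2) →ₗ[ℝ] X.carrier)
    (hj₀ : ∀ h : EuclideanSpace ℝ (Fin 2), X.pnorm.N (j₀ h) = ‖h‖)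
    (hcheck : ∀ (F : Type) [AddCommGroup F] [Module ℝ F], Module.finrank ℝ F = 3 →
      ∀ (NF : PNorm p F) (i : EuclideanSpace ℝ (Fin 2) →ₗ[ℝ] F),
        (∀ h : EuclideanSpace ℝ (Fin 2), NF.N (i h) = ‖h‖) →
        ∃ j : F →ₗ[ℝ] X.carrier,
          (∀ w : F, X.pnorm.N (j w) = NF.N w) ∧
          ∀ h : EuclideanSpace ℝ (Fin 2), j (i h) = j₀ h) :
    ∀ D : Set X.carrier,
      (∀ x : X.carrier, ∀ ε : ℝ, 0 < ε → ∃ y ∈ D, X.pnorm.N (x - y) ^ p < ε) →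
      Cardinal.continuum ≤ Cardinal.mk D := by
  intro D hD
  -- the 3-dimensional space
  have hfr : Module.finrank ℝ (EuclideanSpace ℝ (Fin 2) × ℝ) = 3 := by
    rw [Module.finrank_prod, finrank_euclideanSpace_fin, Module.finrank_self]
  -- for each A : Set ℕ, a point with prescribed distances to j₀ (xvec p n)
  have key : ∀ A : Set ℕ, ∃ xA : X.carrier,
      (∀ n ∈ A, X.pnorm.N (xA - j₀ (xvec p n)) ^ p = rr p n ^ p + 1) ∧
      (∀ n ∉ A, X.pnorm.N (xA - j₀ (xvec p n)) ^ p = rr p n ^ p + 2) := by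
    intro A
    obtain ⟨j, hj1, hj2⟩ := hcheck (EuclideanSpace ℝ (Fin 2) × ℝ) hfr (NPA hp0 hp1 A)
      (LinearMap.inl ℝ _ ℝ) (fun h => NPA_inl hp0 hp1 A h)
    have e1 : ∀ n : ℕ, j (((0 : EuclideanSpace ℝ (Fin 2)), (1:ℝ))) - j₀ (xvec p n)
        = j ((-(xvec p n), (1:ℝ))) := by
      intro n
      have hv : ((0 : EuclideanSpace ℝ (Fin 2)), (1:ℝ)) - (LinearMap.inl ℝ _ ℝ) (xvec p n)
          = (-(xvec p n), (1:ℝ)) := by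
        rw [LinearMap.inl_apply, Prod.mk_sub_mk, zero_sub, sub_zero]
      rw [← hj2 (xvec p n), ← map_sub, hv]
    refine ⟨j ((0 : EuclideanSpace ℝ (Fin 2)), (1:ℝ)), fun n hn => ?_, fun n hn => ?_⟩
    · rw [e1 n, hj1, NPA_profile_mem hp0 hp1 A hn]
    · rw [e1 n, hj1, NPA_profile_not_mem hp0 hp1 A hn]
  choose xf hx1 hx2 using key
  -- pairwise separation
  have nsymm : ∀ w : X.carrier, X.pnorm.N (-w) = X.pnorm.N w := by
    intro w
    have := X.pnorm.smul_eq (-1) w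
    simpa using this
  have sep : ∀ A B : Set ℕ, ∀ n, n ∈ A → n ∉ B →
      1 ≤ X.pnorm.N (xf B - xf A) ^ p := by
    intro A B n hnA hnB
    have tri := X.pnorm.add_pow_le (xf B - xf A) (xf A - j₀ (xvec p n))
    rw [sub_add_sub_cancel] at tri
    rw [hx2 B n hnB, hx1 A n hnA] at tri
    linarith
  -- choose approximants from D
  have hhalf : (0:ℝ) < 1/2 := by norm_num
  choose y hyD hyclose using fun A : Set ℕ => hD (xf A) (1/2) hhalf
  -- injectivity
  have hinj : Function.Injective fun A : Set ℕ => (⟨y A, hyD A⟩ : D) := by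
    intro A B hAB
    have hyAB : y A = y B := congrArg Subtype.val hAB
    by_contra hne
    have hdiff : ∃ n, (n ∈ A ∧ n ∉ B) ∨ (n ∈ B ∧ n ∉ A) := by
      by_contra hc
      push_neg at hc
      exact hne (Set.ext fun n => ⟨(hc n).1, (hc n).2⟩)
    have contra : ∀ C C' : Set ℕ, y C = y C' → (∃ n, n ∈ C ∧ n ∉ C') → False := by
      intro C C' hy ⟨n, hnC, hnC'⟩
      have h1 := sep C C' n hnC hnC'
      have tri := X.pnorm.add_pow_le (xf C' - y C') (y C' - xf C)
      rw [sub_add_sub_cancel] at tri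
      have h2 := hyclose C'
      have h3 : X.pnorm.N (y C' - xf C) ^ p < 1/2 := by
        have heq : y C' - xf C = -(xf C - y C) := by rw [← hy]; exact (neg_sub _ _).symm
        rw [heq, nsymm]
        exact hyclose C
      linarith
    obtain ⟨n, h | h⟩ := hdiff
    · exact contra A B hyAB ⟨n, h.1, h.2⟩
    · exact contra B A hyAB.symm ⟨n, h.1, h.2⟩
  calc Cardinal.continuum = 2 ^ Cardinal.aleph0 := Cardinal.two_power_aleph0.symm
    _ = Cardinal.mk (Set ℕ) := by rw [Cardinal.mk_set, Cardinal.mk_nat]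
    _ ≤ Cardinal.mk D := Cardinal.mk_le_of_injective hinj


end PGurarii
end

section
/- Let p ∈ (0,1], let ε ∈ (0,1), let f : X → Y be an ε-isometry between p-normed spaces, let H be a p-Banach space, and let r : X → H and s : Y → H be nonexpansive linear operators such that N_H(s (f x) − r x) ≤ ε * N_X(x) for all x ∈ X. Then there exists a p-norm M on X × Y such that M (x, 0) = N_X(x) for all x, M (0, y) = N_Y(y) for all y, M (−x, f x) ≤ ε * N_X(x) for all x, and the linear operator (x, y) ↦ r x + s y is nonexpansive from (X × Y, M) to H, i.e. N_H(r x + s y) ≤ M (x, y) for all (x, y) ∈ X × Y. -/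
namespace PGurarii


lemma PNorm.N_zero {p : ℝ} {X : Type} [AddCommGroup X] [Module ℝ X] (NX : PNorm p X) :
    NX.N 0 = 0 := (NX.eq_zero_iff 0).mpr rfl

lemma PNorm.N_neg {p : ℝ} {X : Type} [AddCommGroup X] [Module ℝ X] (NX : PNorm p X) (x : X) :
    NX.N (-x) = NX.N x := by
  simpa using NX.smul_eq (-1) x

lemma rpow_subadd {p a b : ℝ} (hp0 : 0 < p) (hp1 : p ≤ 1) (ha : 0 ≤ a) (hb : 0 ≤ b) :
    (a + b) ^ p ≤ a ^ p + b ^ p := by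
  have h := NNReal.rpow_add_le_add_rpow (a.toNNReal) (b.toNNReal) hp0.le hp1
  have h2 := NNReal.coe_le_coe.mpr h
  push_cast at h2
  rwa [Real.coe_toNNReal _ ha, Real.coe_toNNReal _ hb] at h2

/-- the operator version of the two-space amalgamation lemma: the `p`-norm on
`X × Y` from Lemma `key` can be chosen so that `(x, y) ↦ r x + s y` is nonexpansive into `H`. -/
theorem statement14 (p : ℝ) (hp0 : 0 < p) (hp1 : p ≤ 1)
    (X Y : Type) [AddCommGroup X] [Module ℝ X] [AddCommGroup Y] [Module ℝ Y]
    (NX : PNorm p X) (NY : PNorm p Y)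
    (H : PBanach p)
    (ε : ℝ) (hε0 : 0 < ε) (hε1 : ε < 1)
    (f : X →ₗ[ℝ] Y)
    (hf : ∀ x : X, (1 - ε) * NX.N x ≤ NY.N (f x) ∧ NY.N (f x) ≤ (1 + ε) * NX.N x)
    (r : X →ₗ[ℝ] H.carrier) (hr : ∀ x : X, H.pnorm.N (r x) ≤ NX.N x)
    (s : Y →ₗ[ℝ] H.carrier) (hs : ∀ y : Y, H.pnorm.N (s y) ≤ NY.N y)
    (hclose : ∀ x : X, H.pnorm.N (s (f x) - r x) ≤ ε * NX.N x) :
    ∃ M : PNorm p (X × Y),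
      (∀ x : X, M.N (x, 0) = NX.N x) ∧
      (∀ y : Y, M.N (0, y) = NY.N y) ∧
      (∀ x : X, M.N (-x, f x) ≤ ε * NX.N x) ∧
      ∀ v : X × Y, H.pnorm.N (r v.1 + s v.2) ≤ M.N v := by
  classical
  have hp : p ≠ 0 := hp0.ne'
  set NH := H.pnorm with hNHdef
  set E := ε ^ p with hEdef
  have hE0 : 0 < E := Real.rpow_pos_of_pos hε0 p
  have hE1 : E ≤ 1 := Real.rpow_le_one hε0.le hε1.le hp0.le
  set V : X × Y → X → ℝ := fun v u =>
    NX.N (v.1 + u) ^ p + NY.N (v.2 - f u) ^ p + E * NX.N u ^ p with hVdef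
  have hV0 : ∀ v u, 0 ≤ V v u := fun v u =>
    add_nonneg (add_nonneg (Real.rpow_nonneg (NX.nonneg _) p)
      (Real.rpow_nonneg (NY.nonneg _) p))
      (mul_nonneg hE0.le (Real.rpow_nonneg (NX.nonneg _) p))
  set Q : X × Y → ℝ := fun v => sInf (Set.range (V v)) with hQdef
  have hbdd : ∀ v, BddBelow (Set.range (V v)) := fun v =>
    ⟨0, by rintro t ⟨u, rfl⟩; exact hV0 v u⟩
  have hne : ∀ v, (Set.range (V v)).Nonempty := fun v => ⟨V v 0, 0, rfl⟩
  have hQle : ∀ v u, Q v ≤ V v u := fun v u => csInf_le (hbdd v) ⟨u, rfl⟩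
  have hleQ : ∀ v (c : ℝ), (∀ u, c ≤ V v u) → c ≤ Q v := fun v c h =>
    le_csInf (hne v) (by rintro t ⟨u, rfl⟩; exact h u)
  have hQ0 : ∀ v, 0 ≤ Q v := fun v => hleQ v 0 (hV0 v)
  -- basic facts
  have hNXadd : ∀ x u : X, NX.N x ^ p ≤ NX.N (x + u) ^ p + NX.N u ^ p := by
    intro x u
    have h := NX.add_pow_le (x + u) (-u)
    rwa [add_neg_cancel_right, PNorm.N_neg] at h
  have hNYadd : ∀ y z : Y, NY.N y ^ p ≤ NY.N (y - z) ^ p + NY.N z ^ p := by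
    intro y z
    have h := NY.add_pow_le (y - z) z
    rwa [sub_add_cancel] at h
  -- value of Q on (x, 0)
  have key1 : ∀ x : X, Q (x, (0 : Y)) = NX.N x ^ p := by
    intro x
    apply le_antisymm
    · have h := hQle (x, (0 : Y)) 0
      simpa [hVdef, map_zero, PNorm.N_zero, Real.zero_rpow hp] using h
    · refine hleQ _ _ fun u => ?_
      have h1 : NX.N u ^ p ≤ ((1 - ε) * NX.N u) ^ p + (ε * NX.N u) ^ p := by
        have e : NX.N u = (1 - ε) * NX.N u + ε * NX.N u := by ring
        calc NX.N u ^ p = ((1 - ε) * NX.N u + ε * NX.N u) ^ p := by rw [← e]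
          _ ≤ _ := rpow_subadd hp0 hp1
              (mul_nonneg (by linarith) (NX.nonneg u)) (mul_nonneg hε0.le (NX.nonneg u))
      have h2 : ((1 - ε) * NX.N u) ^ p ≤ NY.N ((0 : Y) - f u) ^ p := by
        rw [zero_sub, PNorm.N_neg]
        exact Real.rpow_le_rpow (mul_nonneg (by linarith) (NX.nonneg u)) (hf u).1 hp0.le
      have h3 : (ε * NX.N u) ^ p = E * NX.N u ^ p := Real.mul_rpow hε0.le (NX.nonneg u)
      have h4 := hNXadd x u
      have hVe : V (x, (0 : Y)) u
          = NX.N (x + u) ^ p + NY.N ((0 : Y) - f u) ^ p + E * NX.N u ^ p := rfl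
      rw [hVe]
      linarith
  -- value of Q on (0, y)
  have key2 : ∀ y : Y, Q ((0 : X), y) = NY.N y ^ p := by
    intro y
    apply le_antisymm
    · have h := hQle ((0 : X), y) 0
      simpa [hVdef, map_zero, PNorm.N_zero, Real.zero_rpow hp] using h
    · refine hleQ _ _ fun u => ?_
      have h1 : NY.N y ^ p ≤ NY.N (y - f u) ^ p + NY.N (f u) ^ p := hNYadd y (f u)
      have hc : (1 + ε) ^ p ≤ 1 + E := by
        have h := rpow_subadd hp0 hp1 (zero_le_one) hε0.le
        simpa [Real.one_rpow] using h
      have h2 : NY.N (f u) ^ p ≤ (1 + E) * NX.N u ^ p := by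
        have ha : NY.N (f u) ^ p ≤ ((1 + ε) * NX.N u) ^ p :=
          Real.rpow_le_rpow (NY.nonneg _) (hf u).2 hp0.le
        have hb : ((1 + ε) * NX.N u) ^ p = (1 + ε) ^ p * NX.N u ^ p :=
          Real.mul_rpow (by linarith) (NX.nonneg u)
        calc NY.N (f u) ^ p ≤ (1 + ε) ^ p * NX.N u ^ p := by rw [← hb]; exact ha
          _ ≤ (1 + E) * NX.N u ^ p :=
            mul_le_mul_of_nonneg_right hc (Real.rpow_nonneg (NX.nonneg u) p)
      have hVe : V ((0 : X), y) u
          = NX.N ((0 : X) + u) ^ p + NY.N (y - f u) ^ p + E * NX.N u ^ p := rfl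
      rw [hVe, zero_add]
      linarith
  -- bound for Q on (-x, f x)
  have key3 : ∀ x : X, Q (-x, f x) ≤ (ε * NX.N x) ^ p := by
    intro x
    have h := hQle (-x, f x) x
    have hVe : V (-x, f x) x = NX.N (-x + x) ^ p + NY.N (f x - f x) ^ p + E * NX.N x ^ p := rfl
    rw [hVe] at h
    simp only [neg_add_cancel, sub_self, PNorm.N_zero, Real.zero_rpow hp] at h
    have h3 : (ε * NX.N x) ^ p = E * NX.N x ^ p := Real.mul_rpow hε0.le (NX.nonneg x)
    rw [h3]
    linarith
  -- nonexpansiveness bound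
  have keyH : ∀ v u, NH.N (r v.1 + s v.2) ^ p ≤ V v u := by
    intro v u
    have hdec : r v.1 + s v.2 = r (v.1 + u) + (s (v.2 - f u) + (s (f u) - r u)) := by
      simp only [map_add, map_sub]; abel
    have hVe : V v u = NX.N (v.1 + u) ^ p + NY.N (v.2 - f u) ^ p + E * NX.N u ^ p := rfl
    have t1 : NH.N (r (v.1 + u)) ^ p ≤ NX.N (v.1 + u) ^ p :=
      Real.rpow_le_rpow (NH.nonneg _) (hr _) hp0.le
    have t2 : NH.N (s (v.2 - f u)) ^ p ≤ NY.N (v.2 - f u) ^ p :=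
      Real.rpow_le_rpow (NH.nonneg _) (hs _) hp0.le
    have t3 : NH.N (s (f u) - r u) ^ p ≤ E * NX.N u ^ p := by
      have := Real.rpow_le_rpow (NH.nonneg _) (hclose u) hp0.le
      rwa [Real.mul_rpow hε0.le (NX.nonneg u)] at this
    have s1 : NH.N (r v.1 + s v.2) ^ p
        ≤ NH.N (r (v.1 + u)) ^ p + NH.N (s (v.2 - f u) + (s (f u) - r u)) ^ p := by
      rw [hdec]; exact NH.add_pow_le _ _
    have s2 : NH.N (s (v.2 - f u) + (s (f u) - r u)) ^ p
        ≤ NH.N (s (v.2 - f u)) ^ p + NH.N (s (f u) - r u) ^ p := NH.add_pow_le _ _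
    rw [hVe]; linarith
  -- triangle inequality for Q
  have hQadd : ∀ v w, Q (v + w) ≤ Q v + Q w := by
    intro v w
    have step : ∀ u1 u2, Q (v + w) ≤ V v u1 + V w u2 := by
      intro u1 u2
      refine (hQle (v + w) (u1 + u2)).trans ?_
      have h1 : NX.N ((v + w).1 + (u1 + u2)) ^ p ≤ NX.N (v.1 + u1) ^ p + NX.N (w.1 + u2) ^ p := by
        have e : (v + w).1 + (u1 + u2) = (v.1 + u1) + (w.1 + u2) := by
          simp only [Prod.fst_add]; abel
        rw [e]; exact NX.add_pow_le _ _
      have h2 : NY.N ((v + w).2 - f (u1 + u2)) ^ p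
          ≤ NY.N (v.2 - f u1) ^ p + NY.N (w.2 - f u2) ^ p := by
        have e : (v + w).2 - f (u1 + u2) = (v.2 - f u1) + (w.2 - f u2) := by
          simp only [Prod.snd_add, map_add]; abel
        rw [e]; exact NY.add_pow_le _ _
      have h3 : E * NX.N (u1 + u2) ^ p ≤ E * NX.N u1 ^ p + E * NX.N u2 ^ p := by
        have := mul_le_mul_of_nonneg_left (NX.add_pow_le u1 u2) hE0.le
        linarith [this]
      have hVe1 : V (v + w) (u1 + u2) = NX.N ((v + w).1 + (u1 + u2)) ^ p
          + NY.N ((v + w).2 - f (u1 + u2)) ^ p + E * NX.N (u1 + u2) ^ p := rfl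
      have hVe2 : V v u1 = NX.N (v.1 + u1) ^ p + NY.N (v.2 - f u1) ^ p + E * NX.N u1 ^ p := rfl
      have hVe3 : V w u2 = NX.N (w.1 + u2) ^ p + NY.N (w.2 - f u2) ^ p + E * NX.N u2 ^ p := rfl
      rw [hVe1, hVe2, hVe3]; linarith
    have step2 : ∀ u1, Q (v + w) - V v u1 ≤ Q w := fun u1 =>
      hleQ w _ (fun u2 => by linarith [step u1 u2])
    have step3 : Q (v + w) - Q w ≤ Q v := hleQ v _ (fun u1 => by linarith [step2 u1])
    linarith
  -- Q at 0
  have hQzero : Q (0 : X × Y) = 0 := by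
    apply le_antisymm
    · have h := hQle 0 0
      simpa [hVdef, map_zero, PNorm.N_zero, Real.zero_rpow hp] using h
    · exact hQ0 0
  -- homogeneity
  have hQsmul : ∀ (a : ℝ) (v : X × Y), Q (a • v) = |a| ^ p * Q v := by
    intro a v
    rcases eq_or_ne a 0 with rfl | ha
    · simp [hQzero, Real.zero_rpow hp]
    have hap : 0 < |a| ^ p := Real.rpow_pos_of_pos (abs_pos.mpr ha) p
    have hVsmul : ∀ u, V (a • v) (a • u) = |a| ^ p * V v u := by
      intro u
      have e1 : (a • v).1 + a • u = a • (v.1 + u) := by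
        simp [Prod.smul_fst, smul_add]
      have e2 : (a • v).2 - f (a • u) = a • (v.2 - f u) := by
        simp [Prod.smul_snd, smul_sub, map_smul]
      have hVe1 : V (a • v) (a • u) = NX.N ((a • v).1 + a • u) ^ p
          + NY.N ((a • v).2 - f (a • u)) ^ p + E * NX.N (a • u) ^ p := rfl
      have hVe2 : V v u = NX.N (v.1 + u) ^ p + NY.N (v.2 - f u) ^ p + E * NX.N u ^ p := rfl
      rw [hVe1, hVe2, e1, e2, NX.smul_eq, NY.smul_eq, NX.smul_eq,
        Real.mul_rpow (abs_nonneg a) (NX.nonneg _),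
        Real.mul_rpow (abs_nonneg a) (NY.nonneg _),
        Real.mul_rpow (abs_nonneg a) (NX.nonneg _)]
      ring
    apply le_antisymm
    · have h1 : ∀ u, Q (a • v) / |a| ^ p ≤ V v u := by
        intro u
        rw [div_le_iff₀ hap]
        have := hQle (a • v) (a • u)
        rw [hVsmul u] at this
        linarith [this]
      have h2 := hleQ v _ h1
      rw [div_le_iff₀ hap] at h2
      linarith [h2]
    · refine hleQ _ _ fun u => ?_
      have e : V (a • v) u = |a| ^ p * V v (a⁻¹ • u) := by
        have := hVsmul (a⁻¹ • u)
        rwa [smul_inv_smul₀ ha] at this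
      rw [e]
      exact mul_le_mul_of_nonneg_left (hQle v _) hap.le
  -- lower bound giving definiteness in first coordinate
  have hlow1 : ∀ v : X × Y, E * NX.N v.1 ^ p ≤ Q v := by
    intro v
    refine hleQ _ _ fun u => ?_
    have h := mul_le_mul_of_nonneg_left (hNXadd v.1 u) hE0.le
    have t1 : E * NX.N (v.1 + u) ^ p ≤ NX.N (v.1 + u) ^ p :=
      mul_le_of_le_one_left (Real.rpow_nonneg (NX.nonneg _) p) hE1
    have t2 : 0 ≤ NY.N (v.2 - f u) ^ p := Real.rpow_nonneg (NY.nonneg _) p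
    have hVe : V v u = NX.N (v.1 + u) ^ p + NY.N (v.2 - f u) ^ p + E * NX.N u ^ p := rfl
    rw [hVe]; nlinarith [h, t1, t2]
  -- the candidate p-norm
  refine ⟨{ N := fun v => Q v ^ p⁻¹
            nonneg := fun v => Real.rpow_nonneg (hQ0 v) _
            eq_zero_iff := ?_
            smul_eq := ?_
            add_pow_le := ?_ }, ?_, ?_, ?_, ?_⟩
  · intro v
    show Q v ^ p⁻¹ = 0 ↔ v = 0
    constructor
    · intro h
      have hq : Q v = 0 := by
        rwa [Real.rpow_eq_zero (hQ0 v) (inv_ne_zero hp)] at h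
      have hx1 : NX.N v.1 = 0 := by
        have := hlow1 v
        rw [hq] at this
        have hx : NX.N v.1 ^ p = 0 := by nlinarith [Real.rpow_nonneg (NX.nonneg v.1) p]
        rwa [Real.rpow_eq_zero (NX.nonneg v.1) hp] at hx
      have hv1 : v.1 = 0 := (NX.eq_zero_iff v.1).mp hx1
      have hy : NY.N v.2 = 0 := by
        have hv : v = ((0 : X), v.2) := by
          ext
          · exact hv1
          · rfl
        have := key2 v.2
        rw [← hv, hq] at this
        have h2 : NY.N v.2 ^ p = 0 :=
          le_antisymm (this.symm.le) (Real.rpow_nonneg (NY.nonneg v.2) p)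
        rwa [Real.rpow_eq_zero (NY.nonneg v.2) hp] at h2
      have hv2 : v.2 = 0 := (NY.eq_zero_iff v.2).mp hy
      exact Prod.ext hv1 hv2
    · rintro rfl
      rw [hQzero, Real.zero_rpow (inv_ne_zero hp)]
  · intro a v
    show Q (a • v) ^ p⁻¹ = |a| * Q v ^ p⁻¹
    rw [hQsmul a v, Real.mul_rpow (Real.rpow_nonneg (abs_nonneg a) p) (hQ0 v),
      Real.rpow_rpow_inv (abs_nonneg a) hp]
  · intro v w
    show (Q (v + w) ^ p⁻¹) ^ p ≤ (Q v ^ p⁻¹) ^ p + (Q w ^ p⁻¹) ^ p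
    rw [Real.rpow_inv_rpow (hQ0 _) hp, Real.rpow_inv_rpow (hQ0 _) hp,
      Real.rpow_inv_rpow (hQ0 _) hp]
    exact hQadd v w
  · intro x
    show Q (x, (0 : Y)) ^ p⁻¹ = NX.N x
    rw [key1 x, Real.rpow_rpow_inv (NX.nonneg x) hp]
  · intro y
    show Q ((0 : X), y) ^ p⁻¹ = NY.N y
    rw [key2 y, Real.rpow_rpow_inv (NY.nonneg y) hp]
  · intro x
    show Q (-x, f x) ^ p⁻¹ ≤ ε * NX.N x
    calc Q (-x, f x) ^ p⁻¹ ≤ ((ε * NX.N x) ^ p) ^ p⁻¹ :=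
          Real.rpow_le_rpow (hQ0 _) (key3 x) (inv_nonneg.mpr hp0.le)
      _ = ε * NX.N x := Real.rpow_rpow_inv (mul_nonneg hε0.le (NX.nonneg x)) hp
  · intro v
    show NH.N (r v.1 + s v.2) ≤ Q v ^ p⁻¹
    have h := hleQ v _ (keyH v)
    calc NH.N (r v.1 + s v.2) = (NH.N (r v.1 + s v.2) ^ p) ^ p⁻¹ :=
          (Real.rpow_rpow_inv (NH.nonneg _) hp).symm
      _ ≤ Q v ^ p⁻¹ := Real.rpow_le_rpow (Real.rpow_nonneg (NH.nonneg _) p) h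
          (inv_nonneg.mpr hp0.le)

end PGurarii
end
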